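/- The space H(A₂) is not σ-compact. -/

import Mathlib

open Set TopologicalSpace Topology Filter

/-- The Hattori topology τ(A) on ℝ: generated by the Euclidean open sets together with
all sets [x, x+ε) with x ∈ ℝ \ A and ε > 0. -/
def hattori (A : Set ℝ) : TopologicalSpace ℝ :=
  TopologicalSpace.generateFrom
    ({s : Set ℝ | IsOpen s} ∪ {s : Set ℝ | ∃ x ∉ A, ∃ ε > 0, s = Set.Ico x (x + ε)})

/-- `B₂`: the set of right endpoints of the closed intervals appearing in the standard
middle-thirds construction of the Cantor set. -/
def B2 : Set ℝ :=
  {x | ∃ n : ℕ, ∃ c : ℕ → ℝ, (∀ i, c i = 0 ∨ c i = 2) ∧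
    x = (∑ i ∈ Finset.range n, c i / 3 ^ (i + 1)) + 1 / 3 ^ n}

/-- `A₂ = ℝ \ B₂`. -/
def A2 : Set ℝ := B2ᶜ

/-- membership in B2 with a witness of prescribed length -/
def B2n (n : ℕ) (x : ℝ) : Prop :=
  ∃ c : ℕ → ℝ, (∀ i, c i = 0 ∨ c i = 2) ∧
    x = (∑ i ∈ Finset.range n, c i / 3 ^ (i + 1)) + 1 / 3 ^ n

lemma B2n_mem_B2 {n x} (h : B2n n x) : x ∈ B2 := ⟨n, h⟩

lemma B2n_append {n : ℕ} {x : ℝ} (h : B2n n x) (d : ℝ) (hd : d = 0 ∨ d = 2) :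
    B2n (n + 1) (x - 1 / 3 ^ n + (d + 1) / 3 ^ (n + 1)) := by
  obtain ⟨c, hc, rfl⟩ := h
  refine ⟨fun i => if i = n then d else c i, ?_, ?_⟩
  · intro i; by_cases hi : i = n <;> simp [hi, hd, hc i]
  · rw [Finset.sum_range_succ]
    have : ∑ i ∈ Finset.range n, (if i = n then d else c i) / 3 ^ (i + 1)
        = ∑ i ∈ Finset.range n, c i / 3 ^ (i + 1) := by
      apply Finset.sum_congr rfl
      intro i hi
      rw [if_neg (Finset.mem_range.mp hi).ne]
    rw [this]
    simp only [eq_self_iff_true, if_true]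
    ring

lemma B2n_succ_self {n : ℕ} {x : ℝ} (h : B2n n x) : B2n (n + 1) x := by
  have := B2n_append h 2 (Or.inr rfl)
  have e : x - 1 / 3 ^ n + ((2:ℝ) + 1) / 3 ^ (n + 1) = x := by
    have h3 : (3:ℝ) ^ (n+1) = 3 * 3 ^ n := by ring
    field_simp [h3]
    ring
  rwa [e] at this

lemma B2n_pred {n : ℕ} {x : ℝ} (h : B2n n x) : B2n (n + 1) (x - 2 / 3 ^ (n + 1)) := by
  have := B2n_append h 0 (Or.inl rfl)
  have e : x - 1 / 3 ^ n + ((0:ℝ) + 1) / 3 ^ (n + 1) = x - 2 / 3 ^ (n + 1) := by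
    have h3 : (3:ℝ) ^ (n+1) = 3 * 3 ^ n := by ring
    field_simp [h3]
    ring
  rwa [e] at this

lemma B2n_add {n : ℕ} {x : ℝ} (h : B2n n x) (k : ℕ) : B2n (n + k) x := by
  induction k with
  | zero => exact h
  | succ k ih => exact B2n_succ_self ih

/-- every point of B2 is the limit of a strictly smaller sequence in B2 -/
lemma exists_approx_seq {b : ℝ} (hb : b ∈ B2) :
    ∃ y : ℕ → ℝ, (∀ k, y k ∈ B2) ∧ (∀ k, y k < b) ∧ Tendsto y atTop (𝓝 b) := by
  obtain ⟨n, hn⟩ := hb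
  refine ⟨fun k => b - 2 / 3 ^ (n + k + 1), fun k => ?_, fun k => ?_, ?_⟩
  · exact B2n_mem_B2 (B2n_pred (B2n_add hn k))
  · have : (0:ℝ) < 2 / 3 ^ (n + k + 1) := by positivity
    linarith
  · have h1 : Tendsto (fun k : ℕ => (2:ℝ) / 3 ^ (n + k + 1)) atTop (𝓝 0) := by
      have : (fun k : ℕ => (2:ℝ) / 3 ^ (n + k + 1))
          = fun k : ℕ => (2 / 3 ^ (n + 1)) * (1/3) ^ k := by
        funext k
        rw [pow_add, pow_add]
        field_simp
        have h13 : ((1:ℝ)/3)^k * 3^k = 1 := by rw [← mul_pow]; norm_num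
        linear_combination (-(3:ℝ)^n*3) * h13
      rw [this]
      have := tendsto_pow_atTop_nhds_zero_of_lt_one
        (by norm_num : (0:ℝ) ≤ 1/3) (by norm_num : (1/3:ℝ) < 1)
      simpa using this.const_mul ((2:ℝ) / 3 ^ (n + 1))
    have := tendsto_const_nhds.sub h1 (α := ℕ) (f := fun _ : ℕ => b)
    simpa using this

lemma one_mem_B2 : (1:ℝ) ∈ B2 :=
  ⟨0, fun _ => 0, fun _ => Or.inl rfl, by simp⟩

lemma mem_nhds_of_isOpen' {X : Type*} {t : TopologicalSpace X} {s : Set X} {x : X}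
    (hs : IsOpen[t] s) (hx : x ∈ s) : s ∈ @nhds X t x :=
  IsOpen.mem_nhds hs hx

lemma hattori_le (A : Set ℝ) : hattori A ≤ (inferInstance : TopologicalSpace ℝ) := by
  have : (inferInstance : TopologicalSpace ℝ)
      = TopologicalSpace.generateFrom {s : Set ℝ | IsOpen s} :=
    (generateFrom_setOf_isOpen _).symm
  rw [this, hattori]
  exact generateFrom_anti Set.subset_union_left

/-- The space H(A₂) is not σ-compact. -/
theorem not_sigmaCompact_hattori_A2 : ¬ @SigmaCompactSpace ℝ (hattori A2) := by
  intro h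
  obtain ⟨K, hKc, hKu⟩ := h.isSigmaCompact_univ
  -- each K n is compact, hence closed, in the Euclidean topology
  have hKcomp : ∀ n, IsCompact (K n) := by
    intro n
    have hcont : Continuous[hattori A2, inferInstance] id :=
      continuous_id_of_le (hattori_le A2)
    have := @IsCompact.image ℝ ℝ (hattori A2) _ (K n) id (hKc n) hcont
    simpa using this
  have hKcl : ∀ n, IsClosed (K n) := fun n => (hKcomp n).isClosed
  -- Baire category on D = closure B2
  set D : Set ℝ := closure B2 with hD
  haveI : CompleteSpace D := IsClosed.completeSpace_coe (hs := isClosed_closure)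
  haveI : Nonempty D := ⟨⟨1, subset_closure one_mem_B2⟩⟩
  have hcover : ⋃ n, (Subtype.val ⁻¹' K n : Set D) = univ := by
    rw [← Set.preimage_iUnion, hKu]; simp
  have hclosed : ∀ n, IsClosed (Subtype.val ⁻¹' K n : Set D) :=
    fun n => (hKcl n).preimage continuous_subtype_val
  obtain ⟨n, z, hz⟩ := nonempty_interior_of_iUnion_of_closed hclosed hcover
  -- get a Euclidean open U with z ∈ U and D ∩ U ⊆ K n
  obtain ⟨U, hUopen, hUeq⟩ := isOpen_induced_iff.mp
    (isOpen_interior (s := (Subtype.val ⁻¹' K n : Set D)))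
  have hzU : (z : ℝ) ∈ U := by rw [← hUeq] at hz; exact hz
  have hUK : ∀ x : ℝ, x ∈ D → x ∈ U → x ∈ K n := by
    intro x hxD hxU
    have : (⟨x, hxD⟩ : D) ∈ Subtype.val ⁻¹' U := hxU
    rw [hUeq] at this
    have h2 : (⟨x, hxD⟩ : D) ∈ (Subtype.val ⁻¹' K n : Set D) := interior_subset this
    exact h2
  -- find b ∈ B2 ∩ U
  have hzD : (z : ℝ) ∈ closure B2 := z.2
  obtain ⟨b, hbU, hbB2⟩ := _root_.mem_closure_iff.mp hzD U hUopen hzU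
  -- sequence in B2 increasing to b
  obtain ⟨y, hyB2, hylt, hytend⟩ := exists_approx_seq hbB2
  -- eventually the sequence is in U, hence in K n
  have hev : ∀ᶠ k in atTop, y k ∈ K n := by
    filter_upwards [hytend.eventually (hUopen.mem_nhds hbU)] with k hk
    exact hUK _ (subset_closure (hyB2 k)) hk
  obtain ⟨N, hN⟩ := eventually_atTop.mp hev
  set y' : ℕ → ℝ := fun k => y (k + N) with hy'
  have hy'K : ∀ k, y' k ∈ K n := fun k => hN _ (Nat.le_add_left N k)
  have hy'tend : Tendsto y' atTop (𝓝 b) :=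
    hytend.comp (tendsto_atTop_atTop_of_monotone (fun a b hab => by omega)
      (fun m => ⟨m, Nat.le_add_right m N⟩))
  -- cluster point of the sequence in the Hattori topology
  have hle : map y' atTop ≤ 𝓟 (K n) := by
    rw [le_principal_iff, mem_map]
    exact Eventually.of_forall hy'K
  obtain ⟨w, hwK, hwcl⟩ := @IsCompact.exists_clusterPt ℝ (hattori A2) (K n)
    (hKc n) (map y' atTop) (map_neBot) hle
  -- w is also a Euclidean cluster point, hence w = b
  have hwcl' : ClusterPt w (map y' atTop) := by
    have hnle : @nhds ℝ (hattori A2) w ≤ @nhds ℝ _ w := nhds_mono (hattori_le A2)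
    exact NeBot.mono hwcl (inf_le_inf_right _ hnle)
  have hwb : w = b := by
    apply eq_of_nhds_neBot
    exact NeBot.mono hwcl' (inf_le_inf_left _ (le_trans le_rfl hy'tend))
  subst hwb
  -- but [b, b+1) is Hattori-open and misses the whole sequence: contradiction
  have hbnotA2 : w ∉ A2 := by
    simp only [A2, Set.mem_compl_iff, not_not]
    exact hbB2
  have hIco_open : IsOpen[hattori A2] (Set.Ico w (w + 1)) :=
    TopologicalSpace.GenerateOpen.basic _ (Or.inr ⟨w, hbnotA2, 1, one_pos, rfl⟩)
  have hIco_mem : Set.Ico w (w + 1) ∈ @nhds ℝ (hattori A2) w :=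
    mem_nhds_of_isOpen' hIco_open ⟨le_rfl, by linarith⟩
  have hset : {x : ℝ | x < w} ∈ map y' atTop := by
    rw [mem_map]
    exact Eventually.of_forall (fun k => hylt (k + N))
  have hmem : Set.Ico w (w + 1) ∩ {x : ℝ | x < w}
      ∈ @nhds ℝ (hattori A2) w ⊓ map y' atTop :=
    inter_mem (mem_inf_of_left hIco_mem) (mem_inf_of_right hset)
  have hempty : Set.Ico w (w + 1) ∩ {x : ℝ | x < w} = ∅ := by
    ext x
    simp only [Set.mem_inter_iff, Set.mem_Ico, Set.mem_setOf_eq, Set.mem_empty_iff_false,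
      iff_false, not_and]
    intro ⟨h1, _⟩ h2
    exact absurd h1 (not_le.mpr h2)
  rw [hempty] at hmem
  exact hwcl.ne (empty_mem_iff_bot.mp hmem)
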